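/- In the discrete Heisenberg group with standard generating set, every infinite subsequence of the sequence of balls {B_n} fails the Besicovitch covering property. -/

import Mathlib

open Finset Pointwise

/-- The discrete Heisenberg group, modeled as triples `(x, y, z)` of integers
corresponding to the upper unitriangular matrix `[[1, x, z], [0, 1, y], [0, 0, 1]]`. -/
structure Heis where
  x : ℤ
  y : ℤ
  z : ℤ
deriving DecidableEq

namespace Heis

instance : Mul Heis := ⟨fun p q => ⟨p.x + q.x, p.y + q.y, p.z + q.z + p.x * q.y⟩⟩
instance : One Heis := ⟨⟨0, 0, 0⟩⟩
instance : Inv Heis := ⟨fun p => ⟨-p.x, -p.y, -p.z + p.x * p.y⟩⟩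

lemma mul_def (p q : Heis) :
    p * q = ⟨p.x + q.x, p.y + q.y, p.z + q.z + p.x * q.y⟩ := rfl
lemma one_def : (1 : Heis) = ⟨0, 0, 0⟩ := rfl
lemma inv_def (p : Heis) : p⁻¹ = ⟨-p.x, -p.y, -p.z + p.x * p.y⟩ := rfl

instance : Group Heis where
  mul_assoc := by
    rintro ⟨ax, ay, az⟩ ⟨bx, by', bz⟩ ⟨cx, cy, cz⟩
    simp only [mul_def, Heis.mk.injEq]
    refine ⟨by ring, by ring, by ring⟩
  one_mul := by
    rintro ⟨x, y, z⟩
    simp only [mul_def, one_def, Heis.mk.injEq]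
    refine ⟨by ring, by ring, by ring⟩
  mul_one := by
    rintro ⟨x, y, z⟩
    simp only [mul_def, one_def, Heis.mk.injEq]
    refine ⟨by ring, by ring, by ring⟩
  inv_mul_cancel := by
    rintro ⟨x, y, z⟩
    show _ * _ = _
    simp only [mul_def, inv_def, one_def, Heis.mk.injEq]
    refine ⟨by ring, by ring, by ring⟩

/-- The generator `a` (adds 1 to the (1,2) entry). -/
def a : Heis := ⟨1, 0, 0⟩

/-- The generator `b` (adds 1 to the (2,3) entry). -/
def b : Heis := ⟨0, 1, 0⟩

/-- The central element `c = b⁻¹ * a⁻¹ * b * a`. -/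
def c : Heis := b⁻¹ * a⁻¹ * b * a

/-- The ball of radius `n` in the word metric with respect to the standard
generating set `{a, a⁻¹, b, b⁻¹}`: all products of at most `n` generators. -/
def ball (n : ℕ) : Finset Heis :=
  (insert (1 : Heis) {a, a⁻¹, b, b⁻¹} : Finset Heis) ^ n


/-- The Besicovitch covering property for a sequence of finite subsets of a group. -/
def IsBesicovitch (F : ℕ → Finset Heis) : Prop :=
  ∃ C : ℕ, ∀ (A : Finset Heis) (ν : Heis → ℕ), ∃ A' ⊆ A,
    (∀ x ∈ A, ∃ g ∈ A', x ∈ (F (ν g)).image (· * g)) ∧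
    ∀ h : Heis, (A'.filter (fun g => h ∈ (F (ν g)).image (· * g))).card ≤ C

/-! ### Auxiliary material for the proof -/

/-- The generating set. -/
def gen : Finset Heis := insert 1 {a, a⁻¹, b, b⁻¹}

lemma ball_eq (n : ℕ) : ball n = gen ^ n := rfl

lemma ainv_eq : (a⁻¹ : Heis) = ⟨-1, 0, 0⟩ := by
  rw [inv_def]; simp [a]

lemma binv_eq : (b⁻¹ : Heis) = ⟨0, -1, 0⟩ := by
  rw [inv_def]; simp [b]

lemma mem_gen {g : Heis} (hg : g ∈ gen) :
    g = 1 ∨ g = a ∨ g = a⁻¹ ∨ g = b ∨ g = b⁻¹ := by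
  simpa [gen] using hg

lemma one_mem_gen : (1 : Heis) ∈ gen := by simp [gen]

/-- The key inductive invariant bounding elements of balls. -/
def Good (n : ℕ) (g : Heis) : Prop :=
  ∃ X L U D : ℤ, 0 ≤ X ∧ 0 ≤ L ∧ 0 ≤ U ∧ 0 ≤ D ∧ g.x ≤ X ∧ -g.x ≤ L ∧
    U - D = g.y ∧ U + D + 2*X + 2*L - (g.x.natAbs : ℤ) ≤ (n : ℤ) ∧ g.z ≤ X*U + L*D

lemma good_of_mem : ∀ {n : ℕ} {g : Heis}, g ∈ ball n → Good n g := by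
  intro n
  induction n with
  | zero =>
    intro g hg
    rw [ball_eq, pow_zero, Finset.mem_one] at hg
    subst hg
    exact ⟨0, 0, 0, 0, le_refl _, le_refl _, le_refl _, le_refl _, by simp [one_def],
      by simp [one_def], by simp [one_def], by simp [one_def], by simp [one_def]⟩
  | succ m ih =>
    intro g hg
    rw [ball_eq, pow_succ] at hg
    obtain ⟨p, hp, s, hs, rfl⟩ := Finset.mem_mul.1 hg
    obtain ⟨X, L, U, D, hX0, hL0, hU0, hD0, hxX, hxL, hUD, hbud, hz⟩ := ih hp
    rcases mem_gen hs with rfl | rfl | rfl | rfl | rfl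
    · -- s = 1
      rw [mul_one]
      exact ⟨X, L, U, D, hX0, hL0, hU0, hD0, hxX, hxL, hUD, by omega, hz⟩
    · -- s = a
      have he : p * a = ⟨p.x + 1, p.y, p.z⟩ := by
        have ha : (a : Heis) = ⟨1, 0, 0⟩ := rfl
        rw [ha, mul_def]
        congr 1 <;> dsimp only <;> ring
      rw [he]
      rcases le_or_gt (p.x + 1) X with hcase | hcase
      · exact ⟨X, L, U, D, hX0, hL0, hU0, hD0, by dsimp only; omega, by dsimp only; omega,
          by dsimp only; omega, by dsimp only; omega, by dsimp only; exact hz⟩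
      · refine ⟨X + 1, L, U, D, by omega, hL0, hU0, hD0, by dsimp only; omega,
          by dsimp only; omega, by dsimp only; omega, by dsimp only; omega, ?_⟩
        dsimp only
        have hr : (X + 1) * U + L * D = X * U + L * D + U := by ring
        linarith [hz, hU0]
    · -- s = a⁻¹
      rw [ainv_eq]
      have he : p * (⟨-1, 0, 0⟩ : Heis) = ⟨p.x - 1, p.y, p.z⟩ := by
        rw [mul_def]
        congr 1 <;> dsimp only <;> ring
      rw [he]
      rcases le_or_gt (1 - p.x) L with hcase | hcase
      · exact ⟨X, L, U, D, hX0, hL0, hU0, hD0, by dsimp only; omega, by dsimp only; omega,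
          by dsimp only; omega, by dsimp only; omega, by dsimp only; exact hz⟩
      · refine ⟨X, L + 1, U, D, hX0, by omega, hU0, hD0, by dsimp only; omega,
          by dsimp only; omega, by dsimp only; omega, by dsimp only; omega, ?_⟩
        dsimp only
        have hr : X * U + (L + 1) * D = X * U + L * D + D := by ring
        linarith [hz, hD0]
    · -- s = b
      have he : p * b = ⟨p.x, p.y + 1, p.z + p.x⟩ := by
        have hb : (b : Heis) = ⟨0, 1, 0⟩ := rfl
        rw [hb, mul_def]
        congr 1 <;> dsimp only <;> ring
      rw [he]
      refine ⟨X, L, U + 1, D, hX0, hL0, by omega, hD0, by dsimp only; omega,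
        by dsimp only; omega, by dsimp only; omega, by dsimp only; omega, ?_⟩
      dsimp only
      have hr : X * (U + 1) + L * D = X * U + L * D + X := by ring
      linarith [hz, hxX]
    · -- s = b⁻¹
      rw [binv_eq]
      have he : p * (⟨0, -1, 0⟩ : Heis) = ⟨p.x, p.y - 1, p.z - p.x⟩ := by
        rw [mul_def]
        congr 1 <;> dsimp only <;> ring
      rw [he]
      refine ⟨X, L, U, D + 1, hX0, hL0, hU0, by omega, by dsimp only; omega,
        by dsimp only; omega, by dsimp only; omega, by dsimp only; omega, ?_⟩
      dsimp only
      have hr : X * U + L * (D + 1) = X * U + L * D + L := by ring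
      linarith [hz, hxL]

lemma inv_mem_gen {s : Heis} (hs : s ∈ gen) : s⁻¹ ∈ gen := by
  rcases mem_gen hs with rfl | rfl | rfl | rfl | rfl <;> simp [gen]

lemma inv_mem_ball : ∀ {n : ℕ} {g : Heis}, g ∈ ball n → g⁻¹ ∈ ball n := by
  intro n
  induction n with
  | zero =>
    intro g hg
    rw [ball_eq, pow_zero, Finset.mem_one] at hg ⊢
    simp [hg]
  | succ m ih =>
    intro g hg
    rw [ball_eq, pow_succ] at hg
    obtain ⟨p, hp, s, hs, rfl⟩ := Finset.mem_mul.1 hg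
    rw [ball_eq, pow_succ', mul_inv_rev]
    exact Finset.mul_mem_mul (inv_mem_gen hs) (ih hp)

/-- The mirror automorphism. -/
def phi (g : Heis) : Heis := ⟨-g.x, g.y, -g.z⟩

lemma phi_mul (p q : Heis) : phi (p * q) = phi p * phi q := by
  simp only [phi, mul_def, Heis.mk.injEq]
  refine ⟨by ring, trivial, by ring⟩

lemma phi_mem_gen {s : Heis} (hs : s ∈ gen) : phi s ∈ gen := by
  rcases mem_gen hs with rfl | rfl | rfl | rfl | rfl
  · simp [phi, gen, one_def]
  · have : phi a = a⁻¹ := by rw [ainv_eq]; simp [phi, a]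
    rw [this]; simp [gen]
  · have : phi a⁻¹ = a := by rw [ainv_eq]; simp [phi, a]
    rw [this]; simp [gen]
  · have : phi b = b := by simp [phi, b]
    rw [this]; simp [gen]
  · have : phi b⁻¹ = b⁻¹ := by rw [binv_eq]; simp [phi]
    rw [this]; simp [gen]

lemma phi_mem_ball : ∀ {n : ℕ} {g : Heis}, g ∈ ball n → phi g ∈ ball n := by
  intro n
  induction n with
  | zero =>
    intro g hg
    rw [ball_eq, pow_zero, Finset.mem_one] at hg ⊢
    subst hg
    simp [phi, one_def]
  | succ m ih =>
    intro g hg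
    rw [ball_eq, pow_succ] at hg
    obtain ⟨p, hp, s, hs, rfl⟩ := Finset.mem_mul.1 hg
    rw [ball_eq, pow_succ, phi_mul]
    exact Finset.mul_mem_mul (ih hp) (phi_mem_gen hs)

/-- Criterion for non-membership in a ball, for elements on the `y = 0` slice with
nonpositive `x` and large positive `z`. -/
lemma not_mem_ball_of (x z : ℤ) (n : ℕ) (hx : x ≤ 0)
    (h : ∀ σ U : ℤ, 0 ≤ σ → 0 ≤ U → 2*σ + 2*U ≤ (n : ℤ) - x → σ * U < z) :
    (⟨x, 0, z⟩ : Heis) ∉ ball n := by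
  intro hm
  obtain ⟨X, L, U, D, hX0, hL0, hU0, hD0, hxX, hxL, hUD, hbud, hz⟩ := good_of_mem hm
  dsimp only at hxX hxL hUD hbud hz
  have hDU : D = U := by omega
  have hb : 2*(X + L) + 2*U ≤ (n : ℤ) - x := by omega
  have hlt := h (X + L) U (by omega) hU0 hb
  subst hDU
  nlinarith [hz, hlt]

lemma xpow (t : ℤ) : ∀ m : ℕ, (⟨t, 0, 0⟩ : Heis) ^ m = ⟨m * t, 0, 0⟩ := by
  intro m
  induction m with
  | zero => simp [one_def]
  | succ k ih =>
    rw [pow_succ, ih, mul_def]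
    simp only [Heis.mk.injEq]
    push_cast
    refine ⟨by ring, trivial, by ring⟩

lemma ypow (t : ℤ) : ∀ m : ℕ, (⟨0, t, 0⟩ : Heis) ^ m = ⟨0, m * t, 0⟩ := by
  intro m
  induction m with
  | zero => simp [one_def]
  | succ k ih =>
    rw [pow_succ, ih, mul_def]
    simp only [Heis.mk.injEq]
    push_cast
    refine ⟨trivial, by ring, by ring⟩

lemma a_pow (m : ℕ) : (a : Heis) ^ m = ⟨(m : ℤ), 0, 0⟩ := by
  have ha : (a : Heis) = ⟨1, 0, 0⟩ := rfl
  rw [ha, xpow]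
  congr 1
  ring

lemma ainv_pow (m : ℕ) : (a⁻¹ : Heis) ^ m = ⟨-(m : ℤ), 0, 0⟩ := by
  rw [ainv_eq, xpow]
  congr 1
  ring

lemma b_pow (m : ℕ) : (b : Heis) ^ m = ⟨0, (m : ℤ), 0⟩ := by
  have hb : (b : Heis) = ⟨0, 1, 0⟩ := rfl
  rw [hb, ypow]
  congr 1
  ring

lemma binv_pow (m : ℕ) : (b⁻¹ : Heis) ^ m = ⟨0, -(m : ℤ), 0⟩ := by
  rw [binv_eq, ypow]
  congr 1
  ring

lemma ball_mono {m n : ℕ} (h : m ≤ n) : ball m ⊆ ball n := by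
  rw [ball_eq, ball_eq]
  exact Finset.pow_subset_pow_right one_mem_gen h

lemma mul_mem_ball {m m' : ℕ} {g g' : Heis} (hg : g ∈ ball m) (hg' : g' ∈ ball m') :
    g * g' ∈ ball (m + m') := by
  rw [ball_eq, pow_add]
  exact Finset.mul_mem_mul hg hg'

lemma gen_pow_mem {s : Heis} (hs : s ∈ gen) (m : ℕ) : s ^ m ∈ ball m := by
  rw [ball_eq]; exact Finset.pow_mem_pow hs

/-- The basic word: `b^W * a⁻¹^L * b⁻¹^W * a^m` lands at `(m - L, 0, L*W)`. -/
lemma word_eq (W L m : ℕ) :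
    (b ^ W) * ((a⁻¹) ^ L) * ((b⁻¹) ^ W) * (a ^ m)
      = (⟨(m : ℤ) - L, 0, (L : ℤ) * W⟩ : Heis) := by
  rw [b_pow, ainv_pow, binv_pow, a_pow, mul_def, mul_def, mul_def]
  congr 1 <;> dsimp only <;> ring

lemma word_mem (W L m : ℕ) :
    (⟨(m : ℤ) - L, 0, (L : ℤ) * W⟩ : Heis) ∈ ball (W + L + W + m) := by
  rw [← word_eq]
  have h1 : (b : Heis) ∈ gen := by simp [gen]
  have h2 : (a⁻¹ : Heis) ∈ gen := by simp [gen]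
  have h3 : (b⁻¹ : Heis) ∈ gen := by simp [gen]
  have h4 : (a : Heis) ∈ gen := by simp [gen]
  exact mul_mem_ball (mul_mem_ball (mul_mem_ball (gen_pow_mem h1 W) (gen_pow_mem h2 L))
    (gen_pow_mem h3 W)) (gen_pow_mem h4 m)

/-! ### The construction -/

/-- Half-budget. -/
def Sq (r k : ℕ) : ℕ := r / 2 + (k + 1)

/-- The height. -/
def Hq (r k : ℕ) : ℕ := (Sq r k - Sq r k / 2) * (Sq r k / 2)

/-- The points. -/
def pt (r k : ℕ) : Heis := ⟨-(2 * (k + 1) : ℤ), 0, (Hq r k : ℤ)⟩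

lemma sq_le_4Hq_add_one (r k : ℕ) : Sq r k ^ 2 ≤ 4 * Hq r k + 1 := by
  have h : Hq r k = (Sq r k - Sq r k / 2) * (Sq r k / 2) := rfl
  rw [h]
  rcases Nat.even_or_odd (Sq r k) with ⟨t, ht⟩ | ⟨t, ht⟩
  · have h1 : Sq r k / 2 = t := by omega
    have h2 : Sq r k - Sq r k / 2 = t := by omega
    rw [h2, h1, ht]
    nlinarith
  · have h1 : Sq r k / 2 = t := by omega
    have h2 : Sq r k - Sq r k / 2 = t + 1 := by omega
    rw [h2, h1, ht]
    nlinarith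

lemma fourHq_le_sq (r k : ℕ) : 4 * Hq r k ≤ Sq r k ^ 2 := by
  have key : ∀ u v : ℕ, 4 * (u * v) ≤ (u + v) ^ 2 := by
    intro u v
    have h : (4 : ℤ) * ((u : ℤ) * v) ≤ ((u : ℤ) + v) ^ 2 := by
      nlinarith [sq_nonneg ((u : ℤ) - v)]
    exact_mod_cast h
  have h2 : Sq r k / 2 ≤ Sq r k := Nat.div_le_self _ _
  have h3 : Sq r k - Sq r k / 2 + Sq r k / 2 = Sq r k := by omega
  have h : Hq r k = (Sq r k - Sq r k / 2) * (Sq r k / 2) := rfl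
  calc 4 * Hq r k = 4 * ((Sq r k - Sq r k / 2) * (Sq r k / 2)) := by rw [h]
    _ ≤ ((Sq r k - Sq r k / 2) + Sq r k / 2) ^ 2 := key _ _
    _ = Sq r k ^ 2 := by rw [h3]

lemma pt_mem {r k : ℕ} (h : 8 * (k + 1) ≤ r) : pt r k ∈ ball r := by
  have hSq : Sq r k = r / 2 + (k + 1) := rfl
  have hL : 2 * (k + 1) ≤ Sq r k - Sq r k / 2 := by omega
  have hmem := word_mem (Sq r k / 2) (Sq r k - Sq r k / 2)
    (Sq r k - Sq r k / 2 - 2 * (k + 1))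
  have hpt : pt r k = (⟨((Sq r k - Sq r k / 2 - 2 * (k + 1) : ℕ) : ℤ)
      - ((Sq r k - Sq r k / 2 : ℕ) : ℤ), 0,
      ((Sq r k - Sq r k / 2 : ℕ) : ℤ) * ((Sq r k / 2 : ℕ) : ℤ)⟩ : Heis) := by
    have hx : (-(2 * (k + 1) : ℤ)) = ((Sq r k - Sq r k / 2 - 2 * (k + 1) : ℕ) : ℤ)
        - ((Sq r k - Sq r k / 2 : ℕ) : ℤ) := by omega
    have hz : (Hq r k : ℤ) = ((Sq r k - Sq r k / 2 : ℕ) : ℤ) * ((Sq r k / 2 : ℕ) : ℤ) := by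
      have hh : Hq r k = (Sq r k - Sq r k / 2) * (Sq r k / 2) := rfl
      rw [hh]
      push_cast
      ring
    rw [pt.eq_def, hx, hz]
  rw [hpt]
  refine ball_mono ?_ hmem
  omega

lemma prod_upper (σ U B : ℤ) (h0 : 0 ≤ σ) (h1 : 0 ≤ U) (h : σ + U ≤ B) :
    4 * (σ * U) ≤ B ^ 2 := by
  nlinarith [sq_nonneg (σ - U), sq_nonneg (σ + U)]

set_option maxHeartbeats 1600000 in
/-- Exclusion: a smaller point is not in the ball around a larger point. -/
lemma pt_excl_lt {rk rl k l N : ℕ} (hkl : k < l) (hkN : k < N)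
    (hgrow : (rk + 2 * N + 10) ^ 2 + 1 ≤ rl)
    (hbig : 20 * ((N + 1) * (N + 1)) + 100 ≤ rk) :
    pt rk k * (pt rl l)⁻¹ ∉ ball rl := by
  have hNP : N + 1 ≤ (N + 1) * (N + 1) := Nat.le_mul_of_pos_left _ (by omega)
  have helt : pt rk k * (pt rl l)⁻¹
      = (⟨2 * (l : ℤ) - 2 * k, 0, (Hq rk k : ℤ) - Hq rl l⟩ : Heis) := by
    show (⟨-(2 * ((k : ℤ) + 1)), 0, (Hq rk k : ℤ)⟩ : Heis)
        * (⟨-(2 * ((l : ℤ) + 1)), 0, (Hq rl l : ℤ)⟩ : Heis)⁻¹ = _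
    rw [inv_def, mul_def]
    congr 1 <;> dsimp only <;> ring
  intro hmem
  rw [helt] at hmem
  have hphi := phi_mem_ball hmem
  have hphieq : phi (⟨2 * (l : ℤ) - 2 * k, 0, (Hq rk k : ℤ) - Hq rl l⟩ : Heis)
      = (⟨2 * (k : ℤ) - 2 * l, 0, (Hq rl l : ℤ) - Hq rk k⟩ : Heis) := by
    show (⟨-(2 * (l : ℤ) - 2 * k), 0, -((Hq rk k : ℤ) - Hq rl l)⟩ : Heis) = _
    congr 1 <;> ring
  rw [hphieq] at hphi
  revert hphi
  refine not_mem_ball_of _ _ _ (by omega) ?_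
  intro σ U hσ hU hbud
  have hSl : Sq rl l = rl / 2 + (l + 1) := rfl
  have hSk : Sq rk k = rk / 2 + (k + 1) := rfl
  have h1 : σ + U ≤ (Sq rl l : ℤ) - 1 := by omega
  have h2 : 4 * (σ * U) ≤ ((Sq rl l : ℤ) - 1) ^ 2 := prod_upper σ U _ hσ hU h1
  have h2' : 4 * (σ * U) ≤ (Sq rl l : ℤ) ^ 2 - 2 * (Sq rl l : ℤ) + 1 := by
    have : ((Sq rl l : ℤ) - 1) ^ 2 = (Sq rl l : ℤ) ^ 2 - 2 * (Sq rl l : ℤ) + 1 := by ring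
    linarith [h2]
  have h3 : (Sq rl l : ℤ) ^ 2 ≤ 4 * (Hq rl l : ℤ) + 1 := by
    exact_mod_cast sq_le_4Hq_add_one rl l
  have h4 : 4 * (Hq rk k : ℤ) ≤ (Sq rk k : ℤ) ^ 2 := by
    exact_mod_cast fourHq_le_sq rk k
  have h5 : (Sq rk k : ℤ) ≤ (rk : ℤ) := by omega
  have h7 : (Sq rk k : ℤ) ^ 2 ≤ (rk : ℤ) ^ 2 := by
    have h50 : (0 : ℤ) ≤ (Sq rk k : ℤ) := Int.natCast_nonneg _
    nlinarith [h5, h50]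
  have h6 : (rk : ℤ) ^ 2 + 3 ≤ 2 * (Sq rl l : ℤ) := by
    have hg : rk ^ 2 + 2 ≤ rl := by nlinarith [hgrow]
    have hg' : (rk : ℤ) ^ 2 + 2 ≤ (rl : ℤ) := by exact_mod_cast hg
    omega
  linarith [h2', h3, h4, h6, h7]

set_option maxHeartbeats 1600000 in
/-- Exclusion: a larger point is not in the ball around a smaller point. -/
lemma pt_excl_gt {rk rl k l N : ℕ} (hlk : l < k) (hlN : l < N) (hkN : k < N)
    (hgrow : (rl + 2 * N + 10) ^ 2 + 1 ≤ rk)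
    (hbig : 20 * ((N + 1) * (N + 1)) + 100 ≤ rl) :
    pt rk k * (pt rl l)⁻¹ ∉ ball rl := by
  have hNP : N + 1 ≤ (N + 1) * (N + 1) := Nat.le_mul_of_pos_left _ (by omega)
  have helt : pt rk k * (pt rl l)⁻¹
      = (⟨2 * (l : ℤ) - 2 * k, 0, (Hq rk k : ℤ) - Hq rl l⟩ : Heis) := by
    show (⟨-(2 * ((k : ℤ) + 1)), 0, (Hq rk k : ℤ)⟩ : Heis)
        * (⟨-(2 * ((l : ℤ) + 1)), 0, (Hq rl l : ℤ)⟩ : Heis)⁻¹ = _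
    rw [inv_def, mul_def]
    congr 1 <;> dsimp only <;> ring
  rw [helt]
  refine not_mem_ball_of _ _ _ (by omega) ?_
  intro σ U hσ hU hbud
  have hSl : Sq rl l = rl / 2 + (l + 1) := rfl
  have hSk : Sq rk k = rk / 2 + (k + 1) := rfl
  set Bv : ℤ := ((rl / 2 : ℕ) : ℤ) + N with hBv
  have hB0 : (0 : ℤ) ≤ Bv := by positivity
  have h1 : σ + U ≤ Bv := by omega
  have h2 : 4 * (σ * U) ≤ Bv ^ 2 := prod_upper σ U _ hσ hU h1
  have h3 : 4 * (Hq rl l : ℤ) ≤ (Sq rl l : ℤ) ^ 2 := by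
    exact_mod_cast fourHq_le_sq rl l
  have h4 : (Sq rl l : ℤ) ≤ Bv + 1 := by omega
  have h40 : (0 : ℤ) ≤ (Sq rl l : ℤ) := Int.natCast_nonneg _
  have h7 : (Sq rl l : ℤ) ^ 2 ≤ Bv ^ 2 + 2 * Bv + 1 := by nlinarith [h4, h40]
  have h5 : (Sq rk k : ℤ) ^ 2 ≤ 4 * (Hq rk k : ℤ) + 1 := by
    exact_mod_cast sq_le_4Hq_add_one rk k
  have h6 : 2 * Bv + 4 ≤ (Sq rk k : ℤ) := by
    have hstep : 2 * rl + 4 * N + 10 ≤ rk := by nlinarith [hgrow]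
    have hstep' : 2 * (rl : ℤ) + 4 * N + 10 ≤ (rk : ℤ) := by exact_mod_cast hstep
    omega
  have h8 : 4 * Bv ^ 2 + 16 * Bv + 16 ≤ (Sq rk k : ℤ) ^ 2 := by nlinarith [h6, hB0]
  linarith [h2, h3, h5, h7, h8, hB0, sq_nonneg Bv]

/-- The index sequence along which radii grow fast enough. -/
def idxSeq (n : ℕ → ℕ) (N : ℕ) : ℕ → ℕ
  | 0 => 20 * ((N + 1) * (N + 1)) + 100
  | k + 1 => idxSeq n N k + ((n (idxSeq n N k)) + 2 * N + 10) ^ 2 + 1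

set_option maxHeartbeats 1600000 in
/-- In the discrete Heisenberg group with the standard generating set, every
infinite subsequence of the sequence of balls fails the Besicovitch covering
property. -/
theorem heisenberg_balls_not_besicovitch :
    ∀ n : ℕ → ℕ, StrictMono n → ¬ IsBesicovitch (fun i => ball (n i)) := by
  intro n hn hB
  obtain ⟨C, hC⟩ := hB
  set N := C + 1 with hNdef
  have hNP : N + 1 ≤ (N + 1) * (N + 1) := Nat.le_mul_of_pos_left _ (by omega)
  set idx : ℕ → ℕ := idxSeq n N with hidx
  have hle : ∀ i, i ≤ n i := fun i => hn.le_apply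
  have hidxlt : ∀ k, idx k < idx (k + 1) := by
    intro k
    have : idx (k + 1) = idx k + ((n (idx k)) + 2 * N + 10) ^ 2 + 1 := rfl
    omega
  have hidxmono : Monotone idx := monotone_nat_of_le_succ (fun k => (hidxlt k).le)
  have hrmono : ∀ k l : ℕ, k ≤ l → n (idx k) ≤ n (idx l) :=
    fun k l h => hn.monotone (hidxmono h)
  have hbig : ∀ k, 20 * ((N + 1) * (N + 1)) + 100 ≤ n (idx k) := by
    intro k
    have h0 : idx 0 = 20 * ((N + 1) * (N + 1)) + 100 := rfl
    calc 20 * ((N + 1) * (N + 1)) + 100 = idx 0 := h0.symm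
      _ ≤ n (idx 0) := hle _
      _ ≤ n (idx k) := hrmono 0 k (Nat.zero_le _)
  have hgrow : ∀ k l : ℕ, k < l → (n (idx k) + 2 * N + 10) ^ 2 + 1 ≤ n (idx l) := by
    intro k l hkl
    have h1 : idx (k + 1) = idx k + ((n (idx k)) + 2 * N + 10) ^ 2 + 1 := rfl
    have h2 : (n (idx k) + 2 * N + 10) ^ 2 + 1 ≤ idx (k + 1) := by omega
    calc (n (idx k) + 2 * N + 10) ^ 2 + 1 ≤ idx (k + 1) := h2
      _ ≤ n (idx (k + 1)) := hle _
      _ ≤ n (idx l) := hrmono _ _ hkl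
  set P : ℕ → Heis := fun k => pt (n (idx k)) k with hP
  have hPmem : ∀ k, k < N → P k ∈ ball (n (idx k)) := by
    intro k hk
    refine pt_mem ?_
    have : 8 * (k + 1) ≤ 20 * ((N + 1) * (N + 1)) + 100 := by omega
    exact le_trans this (hbig k)
  set A : Finset Heis := (Finset.range N).image P with hA
  set ν : Heis → ℕ := fun p => idx ((-p.x / 2 - 1).toNat) with hν
  have hνP : ∀ k : ℕ, ν (P k) = idx k := by
    intro k
    show idx ((-(pt (n (idx k)) k).x / 2 - 1).toNat) = idx k
    have hx : (pt (n (idx k)) k).x = -(2 * ((k : ℤ) + 1)) := rfl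
    rw [hx]
    congr 1
    omega
  obtain ⟨A', hsub, hcov, hmul⟩ := hC A ν
  have hexcl : ∀ k k' : ℕ, k < N → k' < N → k ≠ k' →
      P k * (P k')⁻¹ ∉ ball (n (idx k')) := by
    intro k k' hk hk' hne
    rcases lt_or_gt_of_ne hne with h | h
    · exact pt_excl_lt h hk (hgrow _ _ h) (hbig k)
    · exact pt_excl_gt h hk' hk (hgrow _ _ h) (hbig k')
  have hforce : ∀ k, k < N → P k ∈ A' := by
    intro k hk
    obtain ⟨g, hgA', hgmem⟩ := hcov (P k)
      (Finset.mem_image_of_mem _ (Finset.mem_range.2 hk))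
    obtain ⟨k', hk'r, rfl⟩ := Finset.mem_image.1 (hsub hgA')
    rw [Finset.mem_range] at hk'r
    simp only [hνP k'] at hgmem
    obtain ⟨w, hw, hwe⟩ := Finset.mem_image.1 hgmem
    have hweq : w = P k * (P k')⁻¹ := by
      have : w * P k' = P k := hwe
      rw [← this, mul_inv_cancel_right]
    by_cases hkk : k = k'
    · subst hkk; exact hgA'
    · exact absurd (hweq ▸ hw) (hexcl k k' hk hk'r hkk)
  have hone : ∀ k, k < N →
      P k ∈ A'.filter (fun g => (1 : Heis) ∈ (ball (n (ν g))).image (· * g)) := by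
    intro k hk
    refine Finset.mem_filter.2 ⟨hforce k hk, ?_⟩
    rw [hνP k]
    exact Finset.mem_image.2 ⟨(P k)⁻¹, inv_mem_ball (hPmem k hk), inv_mul_cancel _⟩
  have hinj : Set.InjOn P (Finset.range N) := by
    intro i _ j _ hij
    have hxi : -(2 * ((i : ℤ) + 1)) = -(2 * ((j : ℤ) + 1)) := congrArg Heis.x hij
    omega
  have hcard : N ≤ (A'.filter (fun g => (1 : Heis) ∈ (ball (n (ν g))).image (· * g))).card := by
    have h1 : ((Finset.range N).image P).card = N := by
      rw [Finset.card_image_of_injOn hinj, Finset.card_range]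
    rw [← h1]
    refine Finset.card_le_card ?_
    intro g hg
    obtain ⟨k, hk, rfl⟩ := Finset.mem_image.1 hg
    exact hone k (Finset.mem_range.1 hk)
  have hC1 : (A'.filter (fun g => (1 : Heis) ∈ (ball (n (ν g))).image (· * g))).card ≤ C :=
    hmul 1
  omega

end Heis
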